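/- Let ⟨ℛ, Q, C⟩ be an admissible triple in which ℛ is a Q-valued similarity relation (i.e., additionally transitive: ℛ(x,z) ⊒ ℛ(x,y) ⊓ ℛ(y,z) for all symbols x, y, z). Then for every λ ∈ D ∖ {⊥} and every set Π ⊆ Con_C of C-constraints, the constraint-based term proximity relation ≈_{λ,Π} is transitive on the set of terms: if t ≈_{λ,Π} s and s ≈_{λ,Π} r then t ≈_{λ,Π} r. -/

import Mathlib

/-- A qualification domain: a bounded lattice equipped with an attenuation operation. -/
structure QualificationDomain (D : Type*) [Lattice D] [BoundedOrder D] where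
  att : D → D → D
  att_assoc : ∀ d e f : D, att (att d e) f = att d (att e f)
  att_comm : ∀ d e : D, att d e = att e d
  att_mono : ∀ d d' e e' : D, d ≤ d' → e ≤ e' → att d e ≤ att d' e'
  att_top : ∀ d : D, att d ⊤ = d
  att_bot : ∀ d : D, att d ⊥ = ⊥
  att_le : ∀ d e : D, att d e ≤ e
  att_ne_bot : ∀ d e : D, d ≠ ⊥ → e ≠ ⊥ → att d e ≠ ⊥
  att_inf : ∀ d e₁ e₂ : D, att d (e₁ ⊓ e₂) = att d e₁ ⊓ att d e₂

/-- First-order terms over variables `V` and data constructors `CS`. -/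
inductive Trm (V : Type*) (CS : Type*) : Type _
  | var : V → Trm V CS
  | app : CS → List (Trm V CS) → Trm V CS

variable {V CS DP PP : Type*}

/-- Application of a substitution to a term. -/
def Trm.subst (θ : V → Trm V CS) : Trm V CS → Trm V CS
  | .var X => θ X
  | .app c ts => .app c (ts.attach.map fun t => t.1.subst θ)
decreasing_by
  have := List.sizeOf_lt_of_mem t.2
  simp only [Trm.app.sizeOf_spec]
  omega

/-- Application of a valuation (ground substitution) to a term; ground terms are
terms over the empty set of variables. -/
def Trm.applyVal (η : V → Trm Empty CS) : Trm V CS → Trm Empty CS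
  | .var X => η X
  | .app c ts => .app c (ts.attach.map fun t => t.1.applyVal η)
decreasing_by
  have := List.sizeOf_lt_of_mem t.2
  simp only [Trm.app.sizeOf_spec]
  omega

variable {D : Type*} [Lattice D] [BoundedOrder D]

/-- The extension of a proximity relation on symbols to a proximity relation on terms:
`ext R (var X) (var X) = ⊤`, `ext R t s = ⊥` if exactly one of `t`, `s` is a variable or
they are applications of different arities, and
`ext R (c(t₁,…,tₙ)) (c'(s₁,…,sₙ)) = R c c' ⊓ ext R t₁ s₁ ⊓ ⋯ ⊓ ext R tₙ sₙ`. -/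
def Trm.ext [DecidableEq V] (R : CS → CS → D) : Trm V CS → Trm V CS → D
  | .var X, .var Y => if X = Y then (⊤ : D) else ⊥
  | .var _, .app _ _ => ⊥
  | .app _ _, .var _ => ⊥
  | .app c ts, .app c' ss =>
      if ts.length = ss.length then
        R c c' ⊓ ((ts.zip ss).attach.map (fun p => Trm.ext R p.1.1 p.1.2)).foldr (· ⊓ ·) ⊤
      else ⊥
termination_by t _ => sizeOf t
decreasing_by
  have h1 : p.1.1 ∈ ts := (List.of_mem_zip p.2).1
  have := List.sizeOf_lt_of_mem h1
  simp only [Trm.app.sizeOf_spec]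
  omega

/-- Constraints over terms: primitive atoms, equations, conjunction and
existential quantification. -/
inductive Constr (V CS PP : Type*) : Type _
  | prim : PP → List (Trm V CS) → Constr V CS PP
  | eq : Trm V CS → Trm V CS → Constr V CS PP
  | and : Constr V CS PP → Constr V CS PP → Constr V CS PP
  | ex : V → Constr V CS PP → Constr V CS PP

/-- Satisfaction of a constraint by a valuation, relative to an interpretation `pI` of the
primitive predicates over ground terms.  An equation is true iff both sides evaluate to the
same ground term. -/
def Constr.sat [DecidableEq V] (pI : PP → List (Trm Empty CS) → Prop)
    (η : V → Trm Empty CS) : Constr V CS PP → Prop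
  | .prim p ts => pI p (ts.map (Trm.applyVal η))
  | .eq t s => t.applyVal η = s.applyVal η
  | .and c₁ c₂ => c₁.sat pI η ∧ c₂.sat pI η
  | .ex X c => ∃ u : Trm Empty CS, c.sat pI (Function.update η X u)

/-- The set of solutions of a set of constraints. -/
def Sol [DecidableEq V] (pI : PP → List (Trm Empty CS) → Prop)
    (Pi : Set (Constr V CS PP)) : Set (V → Trm Empty CS) :=
  {η | ∀ c ∈ Pi, c.sat pI η}

/-- Entailment `Π ⊨_C π` of a constraint by a set of constraints. -/
def Entails [DecidableEq V] (pI : PP → List (Trm Empty CS) → Prop)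
    (Pi : Set (Constr V CS PP)) (c : Constr V CS PP) : Prop :=
  ∀ η ∈ Sol pI Pi, c.sat pI η

/-- Semantic form of the entailment `Π' ⊨_C Πθ`: every solution of `Π'`, composed with the
substitution `θ`, is a solution of `Π`. -/
def EntailsSubst [DecidableEq V] (pI : PP → List (Trm Empty CS) → Prop)
    (Pi' : Set (Constr V CS PP)) (θ : V → Trm V CS) (Pi : Set (Constr V CS PP)) : Prop :=
  ∀ η ∈ Sol pI Pi', (fun X => (θ X).applyVal η) ∈ Sol pI Pi

/-- Constraint-based term proximity: `t ≈_{d,Π} s` iff there are terms `t̂`, `ŝ` with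
`Π ⊨_C t == t̂`, `Π ⊨_C s == ŝ` and `ext R t̂ ŝ ⊒ d`. -/
def TermClose [DecidableEq V] (R : CS → CS → D) (pI : PP → List (Trm Empty CS) → Prop)
    (d : D) (Pi : Set (Constr V CS PP)) (t s : Trm V CS) : Prop :=
  ∃ th sh : Trm V CS,
    Entails pI Pi (Constr.eq t th) ∧ Entails pI Pi (Constr.eq s sh) ∧ d ≤ Trm.ext R th sh

/-- A `Q`-valued proximity relation on the symbols (variables, data constructors, defined
predicates, primitive predicates): it is determined by its restrictions to data constructors
and to defined predicate symbols, since it behaves as the identity on variables and is `⊥`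
between symbols of different kinds (and on primitive predicates it is only nonbottom between
equal symbols). -/
structure ProximityRel (D : Type*) [Lattice D] [BoundedOrder D] {CS DP : Type*}
    (arC : CS → ℕ) (arD : DP → ℕ) where
  dc : CS → CS → D
  dp : DP → DP → D
  dc_refl : ∀ c, dc c c = ⊤
  dc_symm : ∀ c c', dc c c' = dc c' c
  dc_arity : ∀ c c', dc c c' ≠ ⊥ → arC c = arC c'
  dp_refl : ∀ r, dp r r = ⊤
  dp_symm : ∀ r r', dp r r' = dp r' r
  dp_arity : ∀ r r', dp r r' ≠ ⊥ → arD r = arD r'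


set_option linter.unusedSectionVars false
section Aux
variable {V CS DP PP : Type*} {D : Type*} [Lattice D] [BoundedOrder D] [DecidableEq V]

lemma applyVal_app (η : V → Trm Empty CS) (c : CS) (ts : List (Trm V CS)) :
    Trm.applyVal η (.app c ts) = .app c (ts.map (Trm.applyVal η)) := by
  rw [Trm.applyVal]; simp [List.attach_map_val]

lemma ext_app_app (R : CS → CS → D) (c c' : CS) (ts ss : List (Trm V CS)) :
    Trm.ext R (Trm.app c ts) (Trm.app c' ss) =
      if ts.length = ss.length then
        R c c' ⊓ ((ts.zip ss).map (fun p => Trm.ext R p.1 p.2)).foldr (· ⊓ ·) ⊤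
      else ⊥ := by
  rw [Trm.ext]; simp [List.attach_map_val (f := fun p : Trm V CS × Trm V CS => Trm.ext R p.1 p.2)]

lemma ext_var_var (R : CS → CS → D) (X Y : V) :
    Trm.ext R (Trm.var (CS := CS) X) (Trm.var Y) = if X = Y then (⊤ : D) else ⊥ := by
  rw [Trm.ext]

lemma ext_var_app (R : CS → CS → D) (X : V) (c : CS) (ss : List (Trm V CS)) :
    Trm.ext R (Trm.var X) (Trm.app c ss) = (⊥ : D) := by rw [Trm.ext]

lemma ext_app_var (R : CS → CS → D) (X : V) (c : CS) (ss : List (Trm V CS)) :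
    Trm.ext R (Trm.app c ss) (Trm.var X) = (⊥ : D) := by rw [Trm.ext]

lemma le_foldr_inf {lam : D} {l : List D} :
    lam ≤ l.foldr (· ⊓ ·) ⊤ ↔ ∀ x ∈ l, lam ≤ x := by
  induction l with
  | nil => simp
  | cons a l ih => simp [le_inf_iff, ih]

lemma ent_eq_iff {pI : PP → List (Trm Empty CS) → Prop} {Pi : Set (Constr V CS PP)}
    {t s : Trm V CS} :
    Entails pI Pi (.eq t s) ↔ ∀ η ∈ Sol pI Pi, Trm.applyVal η t = Trm.applyVal η s := by
  simp [Entails, Constr.sat]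

lemma ent_eq_refl {pI : PP → List (Trm Empty CS) → Prop} {Pi : Set (Constr V CS PP)}
    (t : Trm V CS) : Entails pI Pi (.eq t t) := ent_eq_iff.mpr fun _ _ => rfl

lemma ent_eq_symm {pI : PP → List (Trm Empty CS) → Prop} {Pi : Set (Constr V CS PP)}
    {t s : Trm V CS} (h : Entails pI Pi (.eq t s)) : Entails pI Pi (.eq s t) :=
  ent_eq_iff.mpr fun η hη => (ent_eq_iff.mp h η hη).symm

lemma ent_eq_trans {pI : PP → List (Trm Empty CS) → Prop} {Pi : Set (Constr V CS PP)}
    {t s r : Trm V CS} (h : Entails pI Pi (.eq t s)) (h' : Entails pI Pi (.eq s r)) :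
    Entails pI Pi (.eq t r) :=
  ent_eq_iff.mpr fun η hη => (ent_eq_iff.mp h η hη).trans (ent_eq_iff.mp h' η hη)

lemma map_eq_of_zip {α β γ : Type*} {f : α → γ} {g : β → γ} :
    ∀ {ts : List α} {ss : List β}, ts.map f = ss.map g →
      ∀ p ∈ ts.zip ss, f p.1 = g p.2 := by
  intro ts
  induction ts with
  | nil => intro ss h p hp; simp at hp
  | cons a ts ih =>
      intro ss h p hp
      cases ss with
      | nil => simp at hp
      | cons b ss =>
          simp only [List.map_cons, List.cons.injEq] at h
          simp only [List.zip_cons_cons, List.mem_cons] at hp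
          rcases hp with rfl | hp
          · exact h.1
          · exact ih h.2 p hp

lemma zip_map_eq {α β γ : Type*} {f : α → γ} {g : β → γ} :
    ∀ {ts : List α} {ss : List β}, ts.length = ss.length →
      (∀ p ∈ ts.zip ss, f p.1 = g p.2) → ts.map f = ss.map g := by
  intro ts
  induction ts with
  | nil => intro ss h _; cases ss with
           | nil => rfl
           | cons b ss => simp at h
  | cons a ts ih =>
      intro ss h hp
      cases ss with
      | nil => simp at h
      | cons b ss =>
          simp only [List.length_cons, Nat.add_right_cancel_iff] at h
          simp only [List.map_cons]
          refine congrArg₂ _ (hp (a, b) (by simp)) (ih h fun p hpm => hp p (by simp [hpm]))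

-- inversion lemmas
lemma ext_le_var_right {R : CS → CS → D} {lam : D} (hlam : lam ≠ ⊥) {a : Trm V CS} {X : V}
    (h : lam ≤ Trm.ext R a (.var X)) : a = .var X := by
  cases a with
  | var Y =>
      rw [ext_var_var] at h
      by_cases hXY : Y = X
      · rw [hXY]
      · rw [if_neg hXY] at h; exact absurd (le_bot_iff.mp h) hlam
  | app c ts => rw [ext_app_var] at h; exact absurd (le_bot_iff.mp h) hlam

lemma ext_le_var_left {R : CS → CS → D} {lam : D} (hlam : lam ≠ ⊥) {b : Trm V CS} {X : V}
    (h : lam ≤ Trm.ext R (.var X) b) : b = .var X := by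
  cases b with
  | var Y =>
      rw [ext_var_var] at h
      by_cases hXY : X = Y
      · rw [hXY]
      · rw [if_neg hXY] at h; exact absurd (le_bot_iff.mp h) hlam
  | app c ts => rw [ext_var_app] at h; exact absurd (le_bot_iff.mp h) hlam

lemma ext_le_app_inv {R : CS → CS → D} {lam : D} (hlam : lam ≠ ⊥) {c c' : CS}
    {ts ss : List (Trm V CS)} (h : lam ≤ Trm.ext R (.app c ts) (.app c' ss)) :
    ts.length = ss.length ∧ lam ≤ R c c' ∧ ∀ p ∈ ts.zip ss, lam ≤ Trm.ext R p.1 p.2 := by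
  rw [ext_app_app] at h
  by_cases hl : ts.length = ss.length
  · rw [if_pos hl] at h
    refine ⟨hl, le_trans h inf_le_left, fun p hp => ?_⟩
    have h2 := le_trans h inf_le_right
    exact le_foldr_inf.mp h2 _ (List.mem_map.mpr ⟨p, hp, rfl⟩)
  · rw [if_neg hl] at h; exact absurd (le_bot_iff.mp h) hlam

lemma ext_app_le {R : CS → CS → D} {lam : D} {c c' : CS}
    {ts ss : List (Trm V CS)} (hl : ts.length = ss.length) (hR : lam ≤ R c c')
    (hp : ∀ p ∈ ts.zip ss, lam ≤ Trm.ext R p.1 p.2) :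
    lam ≤ Trm.ext R (.app c ts) (.app c' ss) := by
  rw [ext_app_app, if_pos hl]
  refine le_inf hR (le_foldr_inf.mpr ?_)
  intro x hx
  rcases List.mem_map.mp hx with ⟨p, hpm, rfl⟩
  exact hp p hpm

-- componentwise entailment from app entailment (given a solution exists)
lemma app_entails_components {pI : PP → List (Trm Empty CS) → Prop} {Pi : Set (Constr V CS PP)}
    {c c' : CS} {ts ss : List (Trm V CS)} {η₀ : V → Trm Empty CS} (hη : η₀ ∈ Sol pI Pi)
    (h : Entails pI Pi (.eq (.app c ts) (.app c' ss))) :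
    c = c' ∧ ts.length = ss.length ∧ ∀ p ∈ ts.zip ss, Entails pI Pi (.eq p.1 p.2) := by
  have h0 := ent_eq_iff.mp h η₀ hη
  rw [applyVal_app, applyVal_app, Trm.app.injEq] at h0
  have hlen : ts.length = ss.length := by
    have := congrArg List.length h0.2; simpa using this
  refine ⟨h0.1, hlen, fun p hp => ent_eq_iff.mpr fun η hηs => ?_⟩
  have h1 := ent_eq_iff.mp h η hηs
  rw [applyVal_app, applyVal_app, Trm.app.injEq] at h1
  exact map_eq_of_zip h1.2 p hp

lemma components_entails_app {pI : PP → List (Trm Empty CS) → Prop} {Pi : Set (Constr V CS PP)}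
    {c : CS} {ts ss : List (Trm V CS)} (hl : ts.length = ss.length)
    (h : ∀ p ∈ ts.zip ss, Entails pI Pi (.eq p.1 p.2)) :
    Entails pI Pi (.eq (.app c ts) (.app c ss)) := by
  refine ent_eq_iff.mpr fun η hη => ?_
  rw [applyVal_app, applyVal_app]
  congr 1
  exact zip_map_eq hl fun p hp => ent_eq_iff.mp (h p hp) η hη

end Aux
section Key
set_option linter.unusedSectionVars false
variable {V CS DP PP : Type*} {D : Type*} [Lattice D] [BoundedOrder D] [DecidableEq V]
variable {R : CS → CS → D} {pI : PP → List (Trm Empty CS) → Prop} {Pi : Set (Constr V CS PP)}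
variable {lam : D}

lemma build_lists
    (ts : List (Trm V CS))
    (IH : ∀ u ∈ ts, ∀ a u' b : Trm V CS, lam ≤ Trm.ext R a u →
      Entails pI Pi (.eq u u') → lam ≤ Trm.ext R u' b →
      ∃ a' b', Entails pI Pi (.eq a a') ∧ Entails pI Pi (.eq b b') ∧ lam ≤ Trm.ext R a' b') :
    ∀ (as ss bs : List (Trm V CS)), as.length = ts.length → ts.length = ss.length →
      ss.length = bs.length →
      (∀ p ∈ as.zip ts, lam ≤ Trm.ext R p.1 p.2) →
      (∀ p ∈ ts.zip ss, Entails pI Pi (.eq p.1 p.2)) →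
      (∀ p ∈ ss.zip bs, lam ≤ Trm.ext R p.1 p.2) →
      ∃ as' bs' : List (Trm V CS), as'.length = as.length ∧ bs'.length = as.length ∧
        (∀ p ∈ as.zip as', Entails pI Pi (.eq p.1 p.2)) ∧
        (∀ p ∈ bs.zip bs', Entails pI Pi (.eq p.1 p.2)) ∧
        (∀ p ∈ as'.zip bs', lam ≤ Trm.ext R p.1 p.2) := by
  induction ts with
  | nil =>
      intro as ss bs h1 h2 h3 _ _ _
      rw [List.length_nil] at h1 h2
      refine ⟨[], [], by simp [h1], by simp [h1], ?_, ?_, ?_⟩ <;>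
        · intro p hp; simp at hp
  | cons t ts ih =>
      intro as ss bs h1 h2 h3 ha he hb
      cases as with | nil => simp at h1 | cons a as => ?_
      cases ss with | nil => simp at h2 | cons s ss => ?_
      cases bs with | nil => simp at h3 | cons b bs => ?_
      simp only [List.length_cons, Nat.add_right_cancel_iff] at h1 h2 h3
      obtain ⟨a', b', hea, heb, hext⟩ :=
        IH t (by simp) a s b (ha (a, t) (by simp)) (he (t, s) (by simp)) (hb (s, b) (by simp))
      obtain ⟨as', bs', hl1, hl2, h4, h5, h6⟩ :=
        ih (fun u hu => IH u (by simp [hu])) as ss bs h1 h2 h3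
          (fun p hp => ha p (by simp [hp]))
          (fun p hp => he p (by simp [hp]))
          (fun p hp => hb p (by simp [hp]))
      refine ⟨a' :: as', b' :: bs', by simp [hl1], by simp [hl2], ?_, ?_, ?_⟩ <;>
        · intro p hp
          simp only [List.zip_cons_cons, List.mem_cons] at hp
          rcases hp with rfl | hp
          · first | exact hea | exact heb | exact hext
          · first | exact h4 p hp | exact h5 p hp | exact h6 p hp

lemma key_lemma (h_trans : ∀ c c' c'', R c c' ⊓ R c' c'' ≤ R c c'')
    (hlam : lam ≠ ⊥) {η₀ : V → Trm Empty CS} (hη : η₀ ∈ Sol pI Pi) :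
    ∀ (n : ℕ) (u : Trm V CS), sizeOf u ≤ n → ∀ a u' b : Trm V CS,
      lam ≤ Trm.ext R a u → Entails pI Pi (.eq u u') → lam ≤ Trm.ext R u' b →
      ∃ a' b', Entails pI Pi (.eq a a') ∧ Entails pI Pi (.eq b b') ∧ lam ≤ Trm.ext R a' b' := by
  intro n
  induction n with
  | zero =>
      intro u hu
      cases u with
      | var X => simp at hu
      | app c ts => simp [Trm.app.sizeOf_spec] at hu
  | succ n ihn =>
      intro u hu a u' b ha he hb
      cases u with
      | var X =>
          have haX : a = .var X := ext_le_var_right hlam ha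
          cases u' with
          | var Y =>
              have hbY : b = .var Y := ext_le_var_left hlam hb
              refine ⟨.var X, .var X, by rw [haX]; exact ent_eq_refl _, ?_, ?_⟩
              · rw [hbY]; exact ent_eq_symm he
              · rw [ext_var_var, if_pos rfl]; exact le_top
          | app c' ss =>
              exact ⟨.app c' ss, b, by rw [haX]; exact he, ent_eq_refl _, hb⟩
      | app c ts =>
          cases u' with
          | var Y =>
              have hbY : b = .var Y := ext_le_var_left hlam hb
              exact ⟨a, .app c ts, ent_eq_refl _,
                by rw [hbY]; exact ent_eq_symm he, ha⟩
          | app c' ss =>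
              obtain ⟨hcc', hlts, hcomp⟩ := app_entails_components hη he
              subst hcc'
              cases a with
              | var X => rw [ext_var_app] at ha; exact absurd (le_bot_iff.mp ha) hlam
              | app ca as => ?_
              cases b with
              | var Y => rw [ext_app_var] at hb; exact absurd (le_bot_iff.mp hb) hlam
              | app cb bs => ?_
              obtain ⟨hl1, hR1, hcomp1⟩ := ext_le_app_inv hlam ha
              obtain ⟨hl2, hR2, hcomp2⟩ := ext_le_app_inv hlam hb
              have hsize : ∀ u₁ ∈ ts, sizeOf u₁ ≤ n := by
                intro u₁ hu₁
                have h1 := List.sizeOf_lt_of_mem hu₁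
                simp only [Trm.app.sizeOf_spec] at hu
                omega
              obtain ⟨as', bs', hla, hlb, he1, he2, hext⟩ :=
                build_lists ts (fun u₁ hu₁ => ihn u₁ (hsize u₁ hu₁)) as ss bs hl1 hlts hl2
                  hcomp1 hcomp hcomp2
              refine ⟨.app ca as', .app cb bs',
                components_entails_app hla.symm he1,
                components_entails_app (by omega) he2, ?_⟩
              refine ext_app_le (by omega) ?_ hext
              exact le_trans (le_inf hR1 hR2) (h_trans ca c cb)
end Key

/-- Let `⟨ℛ, Q, C⟩` be an admissible triple in which `ℛ` is a `Q`-valued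
similarity relation (i.e. it is moreover transitive on symbols).  Then for every
`λ ∈ D ∖ {⊥}` and every set `Π` of `C`-constraints, the constraint-based term proximity
relation `≈_{λ,Π}` is transitive on the set of terms. -/
theorem term_proximity_of_similarity_trans [DecidableEq V] {arC : CS → ℕ} {arD : DP → ℕ}
    (Q : QualificationDomain D) (Rl : ProximityRel D arC arD)
    (h_dc_trans : ∀ c c' c'', Rl.dc c c' ⊓ Rl.dc c' c'' ≤ Rl.dc c c'')
    (h_dp_trans : ∀ r r' r'', Rl.dp r r' ⊓ Rl.dp r' r'' ≤ Rl.dp r r'')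
    (pI : PP → List (Trm Empty CS) → Prop)
    (lam : D) (hlam : lam ≠ ⊥) (Pi : Set (Constr V CS PP)) :
    ∀ t s r : Trm V CS, TermClose Rl.dc pI lam Pi t s → TermClose Rl.dc pI lam Pi s r →
      TermClose Rl.dc pI lam Pi t r := by
  intro t s r ⟨th, sh, h1, h2, h3⟩ ⟨sh', rh, h4, h5, h6⟩
  rcases Set.eq_empty_or_nonempty (Sol pI Pi) with hemp | ⟨η₀, hη⟩
  · exact ⟨th, sh, h1, fun η hη => absurd hη (by simp [hemp]), h3⟩
  · have hshsh' : Entails pI Pi (.eq sh sh') := ent_eq_trans (ent_eq_symm h2) h4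
    obtain ⟨a', b', hea, heb, hext⟩ :=
      key_lemma h_dc_trans hlam hη (sizeOf sh) sh le_rfl th sh' rh h3 hshsh' h6
    exact ⟨a', b', ent_eq_trans h1 hea, ent_eq_trans h5 heb, hext⟩
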